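/- Let X_i(t) ⊆ R^n (for i = 1,…,n and t ≥ 0) be nonempty closed convex sets each containing a nonempty set C ⊆ R^n, let A(t) be n×n doubly stochastic matrices, and define iteratively x^i(t+1) = P_{X_i(t)}[w^i(t)] with w^i(t) = Σ_j a_{ij}(t) x^j(t) and errors e^i(t) = x^i(t+1) − w^i(t). Then for every x ∈ C and all t ≥ 0: Σ_{i=1}^n ‖x^i(t+1) − x‖² ≤ Σ_{i=1}^n ‖x^i(t) − x‖² − Σ_{i=1}^n ‖e^i(t)‖². -/

import Mathlib

open scoped RealInnerProductSpace

lemma aux_normsq_convex {E : Type*} [NormedAddCommGroup E] [NormedSpace ℝ E] :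
    ConvexOn ℝ Set.univ (fun v : E => ‖v‖ ^ 2) := by
  refine ⟨convex_univ, fun p _ q _ a b ha hb hab => ?_⟩
  have h1 : ‖a • p + b • q‖ ≤ a * ‖p‖ + b * ‖q‖ := by
    calc ‖a • p + b • q‖ ≤ ‖a • p‖ + ‖b • q‖ := norm_add_le _ _
    _ = a * ‖p‖ + b * ‖q‖ := by rw [norm_smul, norm_smul, Real.norm_of_nonneg ha,
        Real.norm_of_nonneg hb]
  have h2 := (Even.convexOn_pow (𝕜 := ℝ) (even_two)).2 (Set.mem_univ ‖p‖)
    (Set.mem_univ ‖q‖) ha hb hab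
  simp only [smul_eq_mul] at h2
  calc ‖a • p + b • q‖ ^ 2 ≤ (a * ‖p‖ + b * ‖q‖) ^ 2 :=
        pow_le_pow_left₀ (norm_nonneg _) h1 2
    _ ≤ a * ‖p‖ ^ 2 + b * ‖q‖ ^ 2 := h2

lemma aux_proj {E : Type*} [NormedAddCommGroup E] [InnerProductSpace ℝ E]
    {K : Set E} (hK : Convex ℝ K) {u p z : E} (hp : p ∈ K) (hz : z ∈ K)
    (hmin : ∀ y ∈ K, ‖u - p‖ ≤ ‖u - y‖) :
    ‖p - z‖ ^ 2 ≤ ‖u - z‖ ^ 2 - ‖u - p‖ ^ 2 := by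
  haveI : Nonempty K := ⟨⟨p, hp⟩⟩
  have hinf : ‖u - p‖ = ⨅ w : K, ‖u - w‖ :=
    le_antisymm (le_ciInf fun y => hmin y y.2)
      (ciInf_le (f := fun w : K => ‖u - (w : E)‖) ⟨0, fun _ ⟨y, hy⟩ => hy ▸ norm_nonneg _⟩ ⟨p, hp⟩)
  have hinner := (norm_eq_iInf_iff_real_inner_le_zero hK hp).1 hinf z hz
  simp only [inner_sub_left, inner_sub_right, real_inner_self_eq_norm_sq] at hinner
  have e1 := norm_sub_sq_real u z
  have e2 := norm_sub_sq_real p z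
  have e3 := norm_sub_sq_real u p
  have c1 : ⟪p, u⟫ = ⟪u, p⟫ := real_inner_comm _ _
  linarith [hinner, e1, e2, e3]

/-- One step of the projection-based bargaining protocol: if each `X t i` is a
nonempty closed convex set containing a common set `C`, each `A t` is doubly
stochastic, and `x (t+1) i` is the projection of `wⁱ(t) = ∑ⱼ aᵢⱼ(t) xʲ(t)`
onto `X t i`, then for every `z ∈ C` and all `t`,
`∑ᵢ ‖xⁱ(t+1) − z‖² ≤ ∑ᵢ ‖xⁱ(t) − z‖² − ∑ᵢ ‖eⁱ(t)‖²`
where `eⁱ(t) = xⁱ(t+1) − wⁱ(t)`. -/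
theorem stmt8 {n : ℕ} (X : ℕ → Fin n → Set (EuclideanSpace ℝ (Fin n)))
    (C : Set (EuclideanSpace ℝ (Fin n))) (hCne : C.Nonempty)
    (hXne : ∀ t i, (X t i).Nonempty) (hXcl : ∀ t i, IsClosed (X t i))
    (hXcv : ∀ t i, Convex ℝ (X t i)) (hCX : ∀ t i, C ⊆ X t i)
    (A : ℕ → Matrix (Fin n) (Fin n) ℝ)
    (hnonneg : ∀ t i j, 0 ≤ A t i j)
    (hrow : ∀ t i, ∑ j, A t i j = 1)
    (hcol : ∀ t j, ∑ i, A t i j = 1)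
    (x : ℕ → Fin n → EuclideanSpace ℝ (Fin n))
    (w : ℕ → Fin n → EuclideanSpace ℝ (Fin n))
    (hw : ∀ t i, w t i = ∑ j, A t i j • x t j)
    (hproj : ∀ t i, x (t + 1) i ∈ X t i ∧
      ∀ y ∈ X t i, ‖w t i - x (t + 1) i‖ ≤ ‖w t i - y‖)
    (e : ℕ → Fin n → EuclideanSpace ℝ (Fin n))
    (he : ∀ t i, e t i = x (t + 1) i - w t i)
    (z : EuclideanSpace ℝ (Fin n)) (hz : z ∈ C) (t : ℕ) :
    ∑ i, ‖x (t + 1) i - z‖ ^ 2 ≤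
      ∑ i, ‖x t i - z‖ ^ 2 - ∑ i, ‖e t i‖ ^ 2 := by
  have step1 : ∀ i, ‖x (t + 1) i - z‖ ^ 2 ≤ ‖w t i - z‖ ^ 2 - ‖e t i‖ ^ 2 := by
    intro i
    have h := aux_proj (hXcv t i) (hproj t i).1 (hCX t i hz) (hproj t i).2
    have hne : ‖e t i‖ = ‖w t i - x (t + 1) i‖ := by
      rw [he, norm_sub_rev]
    rw [hne]; exact h
  have step2 : ∀ i, ‖w t i - z‖ ^ 2 ≤ ∑ j, A t i j * ‖x t j - z‖ ^ 2 := by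
    intro i
    have hwz : w t i - z = ∑ j, A t i j • (x t j - z) := by
      simp only [smul_sub, Finset.sum_sub_distrib, ← Finset.sum_smul, hrow t i, one_smul,
        hw t i]
    rw [hwz]
    exact aux_normsq_convex.map_sum_le (fun j _ => hnonneg t i j) (hrow t i)
      (fun j _ => Set.mem_univ _)
  have step3 : ∑ i, ∑ j, A t i j * ‖x t j - z‖ ^ 2 = ∑ j, ‖x t j - z‖ ^ 2 := by
    rw [Finset.sum_comm]
    simp_rw [← Finset.sum_mul]
    simp [hcol t]
  calc ∑ i, ‖x (t + 1) i - z‖ ^ 2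
      ≤ ∑ i, (‖w t i - z‖ ^ 2 - ‖e t i‖ ^ 2) := Finset.sum_le_sum fun i _ => step1 i
    _ = ∑ i, ‖w t i - z‖ ^ 2 - ∑ i, ‖e t i‖ ^ 2 := Finset.sum_sub_distrib _ _
    _ ≤ ∑ i, ∑ j, A t i j * ‖x t j - z‖ ^ 2 - ∑ i, ‖e t i‖ ^ 2 := by
        have := Finset.sum_le_sum fun i (_ : i ∈ Finset.univ) => step2 i
        linarith
    _ = ∑ i, ‖x t i - z‖ ^ 2 - ∑ i, ‖e t i‖ ^ 2 := by rw [step3]
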